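/- Let n ≥ 4 be even and let v : ℤ/nℤ → ℝ² be the vertices of a closed polygon in general position, i.e., the vertices are pairwise distinct and no vertex lies on a closed edge segment of which it is not an endpoint. Then it is not possible for every edge to cross all n−3 edges nonadjacent to it: there exist indices i and j with j ∉ {i−1, i, i+1} (mod n) such that the closed segments e_i and e_j are disjoint. -/

import Mathlib

section PolygonAux

lemma seg_mem_combo (c d x : ℝ × ℝ) (θ : ℝ) (h0 : 0 ≤ θ) (h1 : θ ≤ 1)
    (e1 : (1-θ)*c.1 + θ*d.1 = x.1) (e2 : (1-θ)*c.2 + θ*d.2 = x.2) :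
    x ∈ segment ℝ c d := by
  refine ⟨1-θ, θ, by linarith, h0, by ring, ?_⟩
  have : ((1-θ) • c + θ • d : ℝ × ℝ) = ((1-θ)*c.1 + θ*d.1, (1-θ)*c.2 + θ*d.2) := by
    simp [Prod.ext_iff]
  rw [this, e1, e2]

set_option maxHeartbeats 1000000 in
lemma collinear_case (a b c d p : ℝ × ℝ) (hab : a ≠ b)
    (hCc : (b.1-a.1)*(c.2-a.2) - (b.2-a.2)*(c.1-a.1) = 0)
    (hCd : (b.1-a.1)*(d.2-a.2) - (b.2-a.2)*(d.1-a.1) = 0)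
    (hp1 : p ∈ segment ℝ a b) (hp2 : p ∈ segment ℝ c d)
    (hc : c ∉ segment ℝ a b) (hd : d ∉ segment ℝ a b)
    (ha : a ∉ segment ℝ c d) : False := by
  obtain ⟨t1, t2, ht1, ht2, hts, htp⟩ := hp1
  obtain ⟨u1, u2, hu1, hu2, hus, hup⟩ := hp2
  have hpx : t1*a.1 + t2*b.1 = p.1 := by have := congrArg Prod.fst htp; simpa using this
  have hpy : t1*a.2 + t2*b.2 = p.2 := by have := congrArg Prod.snd htp; simpa using this
  have hqx : u1*c.1 + u2*d.1 = p.1 := by have := congrArg Prod.fst hup; simpa using this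
  have hqy : u1*c.2 + u2*d.2 = p.2 := by have := congrArg Prod.snd hup; simpa using this
  have hW : 0 < (b.1-a.1)^2 + (b.2-a.2)^2 := by
    by_contra hW
    push_neg at hW
    have h1 : b.1 - a.1 = 0 := by nlinarith
    have h2 : b.2 - a.2 = 0 := by nlinarith
    exact hab (Prod.ext_iff.mpr ⟨by linarith, by linarith⟩)
  have hWne : ((b.1-a.1)^2 + (b.2-a.2)^2) ≠ 0 := ne_of_gt hW
  set γ := ((c.1-a.1)*(b.1-a.1) + (c.2-a.2)*(b.2-a.2)) / ((b.1-a.1)^2 + (b.2-a.2)^2) with hγdef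
  set δ := ((d.1-a.1)*(b.1-a.1) + (d.2-a.2)*(b.2-a.2)) / ((b.1-a.1)^2 + (b.2-a.2)^2) with hδdef
  have hγ1 : c.1 - a.1 = γ*(b.1-a.1) := by
    rw [hγdef]; field_simp; linear_combination (-(b.2-a.2)) * hCc
  have hγ2 : c.2 - a.2 = γ*(b.2-a.2) := by
    rw [hγdef]; field_simp; linear_combination (b.1-a.1) * hCc
  have hδ1 : d.1 - a.1 = δ*(b.1-a.1) := by
    rw [hδdef]; field_simp; linear_combination (-(b.2-a.2)) * hCd
  have hδ2 : d.2 - a.2 = δ*(b.2-a.2) := by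
    rw [hδdef]; field_simp; linear_combination (b.1-a.1) * hCd
  clear_value γ δ
  have hcγ : γ < 0 ∨ 1 < γ := by
    by_contra hx
    push_neg at hx
    exact hc (seg_mem_combo a b c γ hx.1 hx.2
      (by linear_combination -hγ1) (by linear_combination -hγ2))
  have hdδ : δ < 0 ∨ 1 < δ := by
    by_contra hx
    push_neg at hx
    exact hd (seg_mem_combo a b d δ hx.1 hx.2
      (by linear_combination -hδ1) (by linear_combination -hδ2))
  have hpt : p.1 - a.1 = t2*(b.1-a.1) := by linear_combination -hpx + a.1*hts
  have hpt2 : p.2 - a.2 = t2*(b.2-a.2) := by linear_combination -hpy + a.2*hts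
  have e1 : (t2 - (u1*γ+u2*δ)) * (b.1-a.1) = 0 := by
    linear_combination (-1)*hpt + u1*hγ1 + u2*hδ1 + (-1)*hqx + a.1*hus
  have e2 : (t2 - (u1*γ+u2*δ)) * (b.2-a.2) = 0 := by
    linear_combination (-1)*hpt2 + u1*hγ2 + u2*hδ2 + (-1)*hqy + a.2*hus
  have e3 : (t2 - (u1*γ+u2*δ))^2 * ((b.1-a.1)^2+(b.2-a.2)^2) = 0 := by
    linear_combination ((t2 - (u1*γ+u2*δ))*(b.1-a.1)) * e1 + ((t2 - (u1*γ+u2*δ))*(b.2-a.2)) * e2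
  have hkey : t2 = u1*γ + u2*δ := by
    rcases mul_eq_zero.mp e3 with h' | h'
    · have := pow_eq_zero_iff (n := 2) (by norm_num) |>.mp h'
      linarith
    · exact absurd h' hWne
  have ht2' : t2 ≤ 1 := by linarith
  rcases hcγ with hγ | hγ <;> rcases hdδ with hδ | hδ
  · -- γ < 0, δ < 0
    rcases eq_or_lt_of_le hu1 with h' | h'
    · have h2 : u2 = 1 := by linarith
      rw [← h', h2] at hkey; simp at hkey; linarith
    · nlinarith [mul_pos h' (neg_pos.mpr hγ), mul_nonneg hu2 (neg_nonneg.mpr (le_of_lt hδ))]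
  · -- γ < 0, 1 < δ : 0 strictly between, a ∈ [c,d]
    have hδγ : 0 < δ - γ := by linarith
    set θ := (-γ)/(δ-γ) with hθdef
    have hθe : (1-θ)*γ + θ*δ = 0 := by
      rw [hθdef]; field_simp; ring
    refine ha (seg_mem_combo c d a θ ?_ ?_ ?_ ?_)
    · exact div_nonneg (by linarith) (by linarith)
    · rw [hθdef, div_le_one hδγ]; linarith
    · linear_combination (1-θ)*hγ1 + θ*hδ1 + (b.1-a.1)*hθe
    · linear_combination (1-θ)*hγ2 + θ*hδ2 + (b.2-a.2)*hθe
  · -- 1 < γ, δ < 0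
    have hγδ : 0 < γ - δ := by linarith
    set θ := γ/(γ-δ) with hθdef
    have hθe : (1-θ)*γ + θ*δ = 0 := by
      rw [hθdef]; field_simp; ring
    refine ha (seg_mem_combo c d a θ ?_ ?_ ?_ ?_)
    · exact div_nonneg (by linarith) (by linarith)
    · rw [hθdef, div_le_one hγδ]; linarith
    · linear_combination (1-θ)*hγ1 + θ*hδ1 + (b.1-a.1)*hθe
    · linear_combination (1-θ)*hγ2 + θ*hδ2 + (b.2-a.2)*hθe
  · -- 1 < γ, 1 < δ
    rcases eq_or_lt_of_le hu1 with h' | h'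
    · have h2 : u2 = 1 := by linarith
      rw [← h', h2] at hkey; simp at hkey; linarith
    · nlinarith [mul_pos h' (by linarith : (0:ℝ) < γ - 1), mul_nonneg hu2 (by linarith : (0:ℝ) ≤ δ - 1)]

lemma cross_lemma (a b c d : ℝ × ℝ) (hab : a ≠ b)
    (h : (segment ℝ a b ∩ segment ℝ c d).Nonempty)
    (hc : c ∉ segment ℝ a b) (hd : d ∉ segment ℝ a b)
    (ha : a ∉ segment ℝ c d) (hb : b ∉ segment ℝ c d) :
    ((b.1-a.1)*(c.2-a.2) - (b.2-a.2)*(c.1-a.1)) *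
    ((b.1-a.1)*(d.2-a.2) - (b.2-a.2)*(d.1-a.1)) < 0 := by
  obtain ⟨p, hp1, hp2⟩ := h
  have hp1' := hp1
  have hp2' := hp2
  obtain ⟨t1, t2, ht1, ht2, hts, htp⟩ := hp1'
  obtain ⟨u1, u2, hu1, hu2, hus, hup⟩ := hp2'
  have hpx : t1*a.1 + t2*b.1 = p.1 := by
    have := congrArg Prod.fst htp; simpa using this
  have hpy : t1*a.2 + t2*b.2 = p.2 := by
    have := congrArg Prod.snd htp; simpa using this
  have hqx : u1*c.1 + u2*d.1 = p.1 := by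
    have := congrArg Prod.fst hup; simpa using this
  have hqy : u1*c.2 + u2*d.2 = p.2 := by
    have := congrArg Prod.snd hup; simpa using this
  set Cc := (b.1-a.1)*(c.2-a.2) - (b.2-a.2)*(c.1-a.1) with hCcdef
  set Cd := (b.1-a.1)*(d.2-a.2) - (b.2-a.2)*(d.1-a.1) with hCddef
  have hCp : (b.1-a.1)*(p.2-a.2) - (b.2-a.2)*(p.1-a.1) = 0 := by
    rw [← hpx, ← hpy]; linear_combination (a.2*b.1 - a.1*b.2) * hts
  have hComb : u1 * Cc + u2 * Cd = 0 := by
    rw [hCcdef, hCddef]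
    linear_combination hCp + (b.1-a.1)*hqy - (b.2-a.2)*hqx
      + ((b.2-a.2)*a.1 - (b.1-a.1)*a.2) * hus
  have hu1' : u1 ≠ 0 := by
    intro h0
    apply hd
    have h2 : u2 = 1 := by linarith
    have hpd : p = d := by rw [← hup, h0, h2]; simp
    rwa [hpd] at hp1
  have hu2' : u2 ≠ 0 := by
    intro h0
    apply hc
    have h2 : u1 = 1 := by linarith
    have hpd : p = c := by rw [← hup, h0, h2]; simp
    rwa [hpd] at hp1
  have hu1p : 0 < u1 := lt_of_le_of_ne hu1 (Ne.symm hu1')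
  have hu2p : 0 < u2 := lt_of_le_of_ne hu2 (Ne.symm hu2')
  -- nondegenerate cases
  rcases lt_trichotomy Cc 0 with hCc | hCc | hCc
  · have : 0 < Cd := by nlinarith
    nlinarith
  rotate_left
  · have : Cd < 0 := by nlinarith
    nlinarith
  -- degenerate case : Cc = 0, hence Cd = 0
  have hCd : Cd = 0 := by
    have : u2 * Cd = 0 := by rw [hCc] at hComb; linarith
    rcases mul_eq_zero.mp this with h' | h'
    · exact absurd h' hu2'
    · exact h'
  exact absurd (collinear_case a b c d p hab hCc hCd hp1 hp2 hc hd ha) id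

lemma slope_arith (B1 B2 C1 C2 D1 D2 r : ℝ)
    (hFb : 0 < B1 + r*B2) (hFc : 0 < C1 + r*C2) (hFd : 0 < D1 + r*D2)
    (hcr : (B1*C2 - B2*C1) * (B1*D2 - B2*D1) < 0) :
    (C2/(C1+r*C2) - B2/(B1+r*B2)) * (D2/(D1+r*D2) - B2/(B1+r*B2)) < 0 := by
  have hFbne := ne_of_gt hFb
  have hFcne := ne_of_gt hFc
  have hFdne := ne_of_gt hFd
  have id1 : B1*C2 - B2*C1 = (B1+r*B2) * (C1+r*C2) * (C2/(C1+r*C2) - B2/(B1+r*B2)) := by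
    rw [div_sub_div _ _ hFcne hFbne, mul_div_assoc', eq_div_iff (mul_ne_zero hFcne hFbne)]
    ring
  have id2 : B1*D2 - B2*D1 = (B1+r*B2) * (D1+r*D2) * (D2/(D1+r*D2) - B2/(B1+r*B2)) := by
    rw [div_sub_div _ _ hFdne hFbne, mul_div_assoc', eq_div_iff (mul_ne_zero hFdne hFbne)]
    ring
  rw [id1, id2] at hcr
  set X := C2/(C1+r*C2) - B2/(B1+r*B2) with hX
  set Y := D2/(D1+r*D2) - B2/(B1+r*B2) with hY
  by_contra hcon
  push_neg at hcon
  have hpos := mul_nonneg (le_of_lt (mul_pos (mul_pos hFb hFc) (mul_pos hFb hFd))) hcon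
  nlinarith [hpos, hcr]

end PolygonAux

/-- For a closed polygon with an even number `n ≥ 4` of edges in the plane, in general
position, it is not possible for every edge to cross all `n − 3` edges nonadjacent to it:
there exist nonadjacent edges `e i` and `e j` whose closed segments are disjoint. -/
theorem exists_disjoint_nonadjacent_edges (n : ℕ) (hn : 4 ≤ n) (heven : Even n)
    (v : ZMod n → ℝ × ℝ) (hinj : Function.Injective v)
    (hgen : ∀ k i : ZMod n, v k ∈ segment ℝ (v i) (v (i + 1)) → k = i ∨ k = i + 1) :
    ∃ i j : ZMod n, j ≠ i - 1 ∧ j ≠ i ∧ j ≠ i + 1 ∧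
      segment ℝ (v i) (v (i + 1)) ∩ segment ℝ (v j) (v (j + 1)) = ∅ := by
  by_contra hcon
  push_neg at hcon
  haveI : NeZero n := ⟨by omega⟩
  haveI : Nonempty (ZMod n) := ⟨0⟩
  -- small cast facts
  have hcastne : ∀ k : ℕ, 0 < k → k < n → ((k : ℕ) : ZMod n) ≠ 0 := by
    intro k hk1 hk2 hk
    rw [ZMod.natCast_eq_zero_iff] at hk
    exact absurd (Nat.le_of_dvd hk1 hk) (by omega)
  have h1ne : (1 : ZMod n) ≠ 0 := by
    have := hcastne 1 (by omega) (by omega); exact_mod_cast this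
  have h2ne : (2 : ZMod n) ≠ 0 := by
    have := hcastne 2 (by omega) (by omega); exact_mod_cast this
  have h3ne : (3 : ZMod n) ≠ 0 := by
    have := hcastne 3 (by omega) (by omega); exact_mod_cast this
  -- choose a generic direction r
  obtain ⟨r, hr⟩ := Infinite.exists_notMem_finset
    (Finset.image (fun q : ZMod n × ZMod n =>
      (-((v q.1).1 - (v q.2).1)) / ((v q.1).2 - (v q.2).2)) Finset.univ)
  have hrinj : ∀ i j : ZMod n, i ≠ j →
      (v i).1 + r*(v i).2 ≠ (v j).1 + r*(v j).2 := by
    intro i j hij heq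
    by_cases hy : (v i).2 = (v j).2
    · have hx : (v i).1 = (v j).1 := by rw [hy] at heq; linarith
      exact hij (hinj (Prod.ext_iff.mpr ⟨hx, hy⟩))
    · apply hr
      refine Finset.mem_image.mpr ⟨(i, j), Finset.mem_univ _, ?_⟩
      rw [div_eq_iff (sub_ne_zero.mpr hy)]
      ring_nf
      linarith [heq]
  -- minimal vertex
  obtain ⟨m, hm⟩ := Finite.exists_min (fun i : ZMod n => (v i).1 + r*(v i).2)
  have hF : ∀ j : ZMod n, j ≠ m → 0 < ((v j).1-(v m).1) + r*((v j).2-(v m).2) := by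
    intro j hj
    have h1 := hm j
    have h2 := hrinj j m hj
    have : (v m).1 + r*(v m).2 < (v j).1 + r*(v j).2 := lt_of_le_of_ne h1 (Ne.symm h2)
    linarith
  -- slope function
  set sl : ZMod n → ℝ :=
    fun j => ((v j).2-(v m).2)/(((v j).1-(v m).1) + r*((v j).2-(v m).2)) with hsl
  have hvne : ∀ i j : ZMod n, i ≠ j → v i ≠ v j := fun i j hij h => hij (hinj h)
  -- crossing with edge e_m
  have hA : ∀ j : ZMod n, j ≠ m - 1 → j ≠ m → j ≠ m + 1 →
      (sl j - sl (m+1)) * (sl (j+1) - sl (m+1)) < 0 := by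
    intro j hj1 hj2 hj3
    have hj1m : j + 1 ≠ m := by intro H; exact hj1 (by linear_combination H)
    have hbm : m + 1 ≠ m := by intro H; exact h1ne (by linear_combination H)
    have hnonempty : (segment ℝ (v m) (v (m+1)) ∩ segment ℝ (v j) (v (j+1))).Nonempty :=
      hcon m j hj1 hj2 hj3
    have n1 : v j ∉ segment ℝ (v m) (v (m+1)) := by
      intro hmem; rcases hgen j m hmem with H | H
      · exact hj2 H
      · exact hj3 H
    have n2 : v (j+1) ∉ segment ℝ (v m) (v (m+1)) := by
      intro hmem; rcases hgen (j+1) m hmem with H | H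
      · exact hj1 (by linear_combination H)
      · exact hj2 (by linear_combination H)
    have n3 : v m ∉ segment ℝ (v j) (v (j+1)) := by
      intro hmem; rcases hgen m j hmem with H | H
      · exact hj2 H.symm
      · exact hj1 (by linear_combination -H)
    have n4 : v (m+1) ∉ segment ℝ (v j) (v (j+1)) := by
      intro hmem; rcases hgen (m+1) j hmem with H | H
      · exact hj3 H.symm
      · exact hj2 (by linear_combination -H)
    have hcr := cross_lemma (v m) (v (m+1)) (v j) (v (j+1))
      (hvne m (m+1) (Ne.symm hbm)) hnonempty n1 n2 n3 n4
    have H := slope_arith ((v (m+1)).1-(v m).1) ((v (m+1)).2-(v m).2)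
      ((v j).1-(v m).1) ((v j).2-(v m).2)
      ((v (j+1)).1-(v m).1) ((v (j+1)).2-(v m).2) r
      (hF (m+1) hbm) (hF j hj2) (hF (j+1) hj1m) hcr
    simp only [hsl]
    exact H
  -- crossing of e_{m-1} with e_{m+1}
  have hB : (sl (m+1) - sl (m-1)) * (sl (m+1+1) - sl (m-1)) < 0 := by
    have hc1 : m + 1 ≠ (m-1) - 1 := by intro H; exact h3ne (by linear_combination H)
    have hc2 : m + 1 ≠ m - 1 := by intro H; exact h2ne (by linear_combination H)
    have hc3 : m + 1 ≠ m := by intro H; exact h1ne (by linear_combination H)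
    have hm1m : m - 1 ≠ m := by intro H; exact h1ne (by linear_combination -H)
    have hm2m : m + 1 + 1 ≠ m := by intro H; exact h2ne (by linear_combination H)
    have hseg : segment ℝ (v (m-1)) (v ((m-1)+1)) = segment ℝ (v m) (v (m-1)) := by
      rw [show (m-1)+1 = m from by ring]; exact segment_symm ℝ _ _
    have hnonempty : (segment ℝ (v m) (v (m-1)) ∩ segment ℝ (v (m+1)) (v (m+1+1))).Nonempty := by
      rw [← hseg]
      exact hcon (m-1) (m+1) hc1 hc2 (by rw [show (m-1)+1 = m from by ring]; exact hc3)
    have n1 : v (m+1) ∉ segment ℝ (v m) (v (m-1)) := by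
      intro hmem; rw [← hseg] at hmem
      rcases hgen (m+1) (m-1) hmem with H | H
      · exact h2ne (by linear_combination H)
      · exact h1ne (by linear_combination H)
    have n2 : v (m+1+1) ∉ segment ℝ (v m) (v (m-1)) := by
      intro hmem; rw [← hseg] at hmem
      rcases hgen (m+1+1) (m-1) hmem with H | H
      · exact h3ne (by linear_combination H)
      · exact h2ne (by linear_combination H)
    have n3 : v m ∉ segment ℝ (v (m+1)) (v (m+1+1)) := by
      intro hmem; rcases hgen m (m+1) hmem with H | H
      · exact h1ne (by linear_combination -H)
      · exact h2ne (by linear_combination -H)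
    have n4 : v (m-1) ∉ segment ℝ (v (m+1)) (v (m+1+1)) := by
      intro hmem; rcases hgen (m-1) (m+1) hmem with H | H
      · exact h2ne (by linear_combination -H)
      · exact h3ne (by linear_combination -H)
    have hcr := cross_lemma (v m) (v (m-1)) (v (m+1)) (v (m+1+1))
      (hvne m (m-1) (Ne.symm hm1m)) hnonempty n1 n2 n3 n4
    have H := slope_arith ((v (m-1)).1-(v m).1) ((v (m-1)).2-(v m).2)
      ((v (m+1)).1-(v m).1) ((v (m+1)).2-(v m).2)
      ((v (m+1+1)).1-(v m).1) ((v (m+1+1)).2-(v m).2) r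
      (hF (m-1) hm1m) (hF (m+1) hc3) (hF (m+1+1) hm2m) hcr
    simp only [hsl]
    exact H
  -- alternation chain along edge e_m
  have chain : ∀ k : ℕ, k ≤ n - 3 →
      0 < (sl (m+2+(k : ZMod n)) - sl (m+1)) * (sl (m+2) - sl (m+1)) * (-1:ℝ)^k := by
    intro k
    induction k with
    | zero =>
      intro _
      have hA0 := hA (m+2) (by intro H; exact h3ne (by linear_combination H))
        (by intro H; exact h2ne (by linear_combination H))
        (by intro H; exact h1ne (by linear_combination H))
      have hne0 : sl (m+2) - sl (m+1) ≠ 0 := by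
        intro h0; rw [h0] at hA0; simp at hA0
      simp only [Nat.cast_zero, add_zero, pow_zero, mul_one]
      exact mul_self_pos.mpr hne0
    | succ k ih =>
      intro hk
      have ihh := ih (by omega)
      have hstep := hA (m+2+(k : ZMod n))
        (by intro H
            have : ((k+3 : ℕ) : ZMod n) = 0 := by push_cast; linear_combination H
            exact hcastne (k+3) (by omega) (by omega) this)
        (by intro H
            have : ((k+2 : ℕ) : ZMod n) = 0 := by push_cast; linear_combination H
            exact hcastne (k+2) (by omega) (by omega) this)
        (by intro H
            have : ((k+1 : ℕ) : ZMod n) = 0 := by push_cast; linear_combination H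
            exact hcastne (k+1) (by omega) (by omega) this)
      have hcast : m+2+((k+1 : ℕ) : ZMod n) = m+2+(k : ZMod n)+1 := by push_cast; ring
      rw [hcast, pow_succ]
      nlinarith [mul_pos ihh (neg_pos.mpr hstep),
        sq_nonneg (sl (m+2+(k : ZMod n)) - sl (m+1))]
  -- conclude
  have hfin := chain (n-3) (le_refl _)
  have hidx : m+2+((n-3 : ℕ) : ZMod n) = m - 1 := by
    have h1 : ((n-3 : ℕ) : ZMod n) + ((3 : ℕ) : ZMod n) = ((n : ℕ) : ZMod n) := by
      rw [← Nat.cast_add]; congr 1; omega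
    rw [ZMod.natCast_self] at h1
    push_cast at h1
    linear_combination h1
  have hodd : Odd (n-3) := by
    obtain ⟨k, hk⟩ := heven; exact ⟨k-2, by omega⟩
  rw [hidx, hodd.neg_one_pow] at hfin
  have hB' : (sl (m+1) - sl (m-1)) * (sl (m+2) - sl (m-1)) < 0 := by
    have : m+1+1 = m+2 := by ring
    rwa [this] at hB
  nlinarith [hfin, hB', sq_nonneg (sl (m-1) - sl (m+1))]
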